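/- arXiv:1811.04055 — 7 statements merged into one kernel-verified Lean document; each statement's English description precedes it below -/
import Mathlib

section
/- For all real q > 0 and ρ > 0, (1/4)·max{q^{4/3}, qρ} ≤ ∫₀^q (ρ + min{ω^{1/3}, ω²/ρ⁵}) dω ≤ 3·max{q^{4/3}, qρ}. -/
open MeasureTheory

private lemma mul_rpow_third (x : ℝ) (hx : 0 < x) :
    x * x ^ ((1:ℝ)/3) = x ^ ((4:ℝ)/3) := by
  nth_rewrite 1 [← Real.rpow_one x]
  rw [← Real.rpow_add hx]; norm_num

private lemma cube_rpow (x : ℝ) (hx : 0 ≤ x) :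
    (x ^ 3) ^ ((5:ℝ)/3) = x ^ 5 := by
  rw [← Real.rpow_natCast x 3, ← Real.rpow_mul hx, ← Real.rpow_natCast x 5]
  norm_num

theorem stmt_2 (q ρ : ℝ) (hq : 0 < q) (hρ : 0 < ρ) :
    (1/4) * max (q ^ ((4:ℝ)/3)) (q * ρ) ≤
      (∫ ω in (0:ℝ)..q, (ρ + min (ω ^ ((1:ℝ)/3)) (ω ^ 2 / ρ ^ 5))) ∧
    (∫ ω in (0:ℝ)..q, (ρ + min (ω ^ ((1:ℝ)/3)) (ω ^ 2 / ρ ^ 5))) ≤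
      3 * max (q ^ ((4:ℝ)/3)) (q * ρ) := by
  set f : ℝ → ℝ := fun ω => ρ + min (ω ^ ((1:ℝ)/3)) (ω ^ 2 / ρ ^ 5) with hf
  have hcont : Continuous f :=
    continuous_const.add ((Real.continuous_rpow_const (by norm_num)).min
      ((continuous_pow 2).div_const _))
  have hint : ∀ a b : ℝ, IntervalIntegrable f volume a b :=
    fun a b => hcont.intervalIntegrable a b
  have hmin_nonneg : ∀ ω : ℝ, 0 ≤ ω → 0 ≤ min (ω ^ ((1:ℝ)/3)) (ω ^ 2 / ρ ^ 5) := by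
    intro ω hω
    exact le_min (Real.rpow_nonneg hω _) (div_nonneg (sq_nonneg _) (by positivity))
  have hfρ : ∀ ω ∈ Set.Icc (0:ℝ) q, ρ ≤ f ω := by
    intro ω hω
    have := hmin_nonneg ω hω.1
    simp only [hf]; linarith
  have h1 : q * ρ ≤ ∫ ω in (0:ℝ)..q, f ω := by
    have := intervalIntegral.integral_mono_on hq.le (intervalIntegrable_const (c := ρ))
      (hint 0 q) hfρ
    simpa using this
  have hrint : IntervalIntegrable (fun ω : ℝ => ρ + ω ^ ((1:ℝ)/3)) volume 0 q :=
    (continuous_const.add (Real.continuous_rpow_const (by norm_num))).intervalIntegrable 0 q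
  have hqρ0 : 0 ≤ q * ρ := by positivity
  have hmax1 : q ^ ((4:ℝ)/3) ≤ max (q ^ ((4:ℝ)/3)) (q * ρ) := le_max_left _ _
  have hmax2 : q * ρ ≤ max (q ^ ((4:ℝ)/3)) (q * ρ) := le_max_right _ _
  constructor
  · -- lower bound
    rcases le_total (q ^ ((4:ℝ)/3)) (q * ρ) with hcase | hcase
    · rw [max_eq_right hcase]
      linarith
    · rw [max_eq_left hcase]
      rcases le_total q (2 * ρ ^ 3) with hc2 | hc2
      · -- q ≤ 2ρ³ : q^{4/3} ≤ 2 q ρ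
        have h13 : q ^ ((1:ℝ)/3) ≤ 2 * ρ := by
          have : q ^ ((1:ℝ)/3) ≤ (8 * ρ ^ 3) ^ ((1:ℝ)/3) := by
            apply Real.rpow_le_rpow hq.le (by nlinarith) (by norm_num)
          calc q ^ ((1:ℝ)/3) ≤ (8 * ρ ^ 3) ^ ((1:ℝ)/3) := this
            _ = ((2 * ρ) ^ (3:ℕ)) ^ ((1:ℝ)/3) := by ring_nf
            _ = 2 * ρ := by
                rw [← Real.rpow_natCast (2*ρ) 3, ← Real.rpow_mul (by positivity)]
                norm_num
        have : q ^ ((4:ℝ)/3) ≤ 2 * (q * ρ) := by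
          rw [← mul_rpow_third q hq]
          nlinarith
        linarith
      · -- 2ρ³ ≤ q
        have hq2 : (0:ℝ) < q/2 := by linarith
        have hρ3 : ρ ^ 3 ≤ q / 2 := by nlinarith
        set c := (q/2) ^ ((1:ℝ)/3) with hc
        have hc0 : 0 ≤ c := Real.rpow_nonneg hq2.le _
        have hpt : ∀ ω ∈ Set.Icc (q/2) q, c ≤ f ω := by
          intro ω hω
          have hω0 : 0 < ω := lt_of_lt_of_le hq2 hω.1
          have h13 : c ≤ ω ^ ((1:ℝ)/3) := Real.rpow_le_rpow hq2.le hω.1 (by norm_num)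
          have h53 : ρ ^ 5 ≤ (q/2) ^ ((5:ℝ)/3) := by
            rw [← cube_rpow ρ hρ.le]
            exact Real.rpow_le_rpow (by positivity) hρ3 (by norm_num)
          have hcmul : c * (q/2) ^ ((5:ℝ)/3) = (q/2) ^ 2 := by
            rw [hc, ← Real.rpow_add hq2]
            norm_num
          have h2 : c ≤ ω ^ 2 / ρ ^ 5 := by
            rw [le_div_iff₀ (by positivity)]
            have hω2 : (q/2) ^ 2 ≤ ω ^ 2 := by nlinarith [hω.1]
            calc c * ρ ^ 5 ≤ c * (q/2) ^ ((5:ℝ)/3) := by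
                  exact mul_le_mul_of_nonneg_left h53 hc0
              _ = (q/2) ^ 2 := hcmul
              _ ≤ ω ^ 2 := hω2
          have : c ≤ min (ω ^ ((1:ℝ)/3)) (ω ^ 2 / ρ ^ 5) := le_min h13 h2
          simp only [hf]; linarith
        have hI2 : (q/2) * c ≤ ∫ ω in (q/2)..q, f ω := by
          have := intervalIntegral.integral_mono_on (by linarith : q/2 ≤ q)
            (intervalIntegrable_const (c := c)) (hint (q/2) q) hpt
          simp only [intervalIntegral.integral_const, smul_eq_mul] at this
          have heq : q - q/2 = q/2 := by ring
          rw [heq] at this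
          exact this
        have hI1 : 0 ≤ ∫ ω in (0:ℝ)..(q/2), f ω := by
          apply intervalIntegral.integral_nonneg hq2.le
          intro ω hω
          have := hmin_nonneg ω hω.1
          simp only [hf]; linarith
        have hsplit : (∫ ω in (0:ℝ)..(q/2), f ω) + (∫ ω in (q/2)..q, f ω)
            = ∫ ω in (0:ℝ)..q, f ω :=
          intervalIntegral.integral_add_adjacent_intervals (hint 0 (q/2)) (hint (q/2) q)
        have hval : (q/2) * c = (q/2) ^ ((4:ℝ)/3) := mul_rpow_third _ hq2
        have ha : (2:ℝ) ^ ((4:ℝ)/3) ≤ 4 := by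
          calc (2:ℝ) ^ ((4:ℝ)/3) ≤ (2:ℝ) ^ (2:ℝ) :=
                Real.rpow_le_rpow_of_exponent_le (by norm_num) (by norm_num)
            _ = 4 := by
                rw [show (2:ℝ) ^ (2:ℝ) = (2:ℝ) ^ ((2:ℕ):ℝ) by norm_num,
                  Real.rpow_natCast]
                norm_num
        have hb : (0:ℝ) < (2:ℝ) ^ ((4:ℝ)/3) := Real.rpow_pos_of_pos (by norm_num) _
        have hq43 : 0 ≤ q ^ ((4:ℝ)/3) := Real.rpow_nonneg hq.le _
        have h43 : (1/4) * q ^ ((4:ℝ)/3) ≤ (q/2) ^ ((4:ℝ)/3) := by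
          rw [Real.div_rpow hq.le (by norm_num), le_div_iff₀ hb]
          nlinarith
        linarith
  · -- upper bound
    have hle : ∀ ω ∈ Set.Icc (0:ℝ) q, f ω ≤ ρ + ω ^ ((1:ℝ)/3) := by
      intro ω hω
      exact add_le_add le_rfl (min_le_left _ _)
    have h2 := intervalIntegral.integral_mono_on hq.le (hint 0 q) hrint hle
    have hval : (∫ ω in (0:ℝ)..q, (ρ + ω ^ ((1:ℝ)/3)))
        = q * ρ + (3/4) * q ^ ((4:ℝ)/3) := by
      rw [intervalIntegral.integral_add (intervalIntegrable_const)
        ((Real.continuous_rpow_const (by norm_num)).intervalIntegrable 0 q),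
        integral_rpow (Or.inl (by norm_num))]
      rw [Real.zero_rpow (by norm_num : (1:ℝ)/3 + 1 ≠ 0)]
      simp
      rw [show (3:ℝ)⁻¹ + 1 = (4:ℝ)/3 by norm_num]
      ring
    have hq43 : 0 ≤ q ^ ((4:ℝ)/3) := Real.rpow_nonneg hq.le _
    rw [hval] at h2
    have : q * ρ + (3/4) * q ^ ((4:ℝ)/3) ≤ 3 * max (q ^ ((4:ℝ)/3)) (q * ρ) := by
      nlinarith [hmax1, hmax2]
    linarith
end

section
/- Let Ψ_edge(λ) := √(λ(1+λ)) / ((1+2λ+2√(λ(1+λ)))^{2/3} + (1+2λ−2√(λ(1+λ)))^{2/3} + 1) for λ ≥ 0. Then there exist constants c, C > 0 such that for all λ ≥ 0, c·min{λ^{1/2}, λ^{1/3}} ≤ Ψ_edge(λ) ≤ C·min{λ^{1/2}, λ^{1/3}}. -/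
/-- The universal edge shape function. -/
noncomputable def PsiEdge (l : ℝ) : ℝ :=
  Real.sqrt (l * (1 + l)) /
    ((1 + 2*l + 2*Real.sqrt (l*(1+l))) ^ ((2:ℝ)/3) +
     (1 + 2*l - 2*Real.sqrt (l*(1+l))) ^ ((2:ℝ)/3) + 1)

private lemma sqrt_le_of_sq' (a b : ℝ) (hb : 0 ≤ b) (h : a ≤ b^2) : Real.sqrt a ≤ b := by
  calc Real.sqrt a ≤ Real.sqrt (b^2) := Real.sqrt_le_sqrt h
  _ = b := Real.sqrt_sq hb

private lemma eight_rpow : (8:ℝ) ^ ((2:ℝ)/3) = 4 := by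
  have h2 : (8:ℝ) = (2:ℝ) ^ (3:ℝ) := by
    rw [show (3:ℝ) = ((3:ℕ):ℝ) by norm_num, Real.rpow_natCast]; norm_num
  rw [h2, ← Real.rpow_mul (by norm_num : (0:ℝ) ≤ 2),
    show (3:ℝ) * (2/3) = ((2:ℕ):ℝ) by norm_num, Real.rpow_natCast]
  norm_num

set_option maxHeartbeats 1600000 in
theorem stmt_3 : ∃ c C : ℝ, 0 < c ∧ 0 < C ∧ ∀ l : ℝ, 0 ≤ l →
    c * min (l ^ ((1:ℝ)/2)) (l ^ ((1:ℝ)/3)) ≤ PsiEdge l ∧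
    PsiEdge l ≤ C * min (l ^ ((1:ℝ)/2)) (l ^ ((1:ℝ)/3)) := by
  refine ⟨1/8, 2, by norm_num, by norm_num, fun l hl => ?_⟩
  rcases eq_or_lt_of_le hl with h0 | h0
  · subst h0
    simp [PsiEdge, Real.zero_rpow (by norm_num : ((1:ℝ)/2) ≠ 0),
      Real.zero_rpow (by norm_num : ((1:ℝ)/3) ≠ 0)]
  · have hl' : (0:ℝ) < l := h0
    unfold PsiEdge
    set s := Real.sqrt (l*(1+l)) with hs
    have hll : (0:ℝ) ≤ l*(1+l) := by positivity
    have hs0 : 0 ≤ s := Real.sqrt_nonneg _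
    have hssq : s^2 = l*(1+l) := Real.sq_sqrt hll
    have h2s : 2*s ≤ 1+2*l := by
      have := sqrt_le_of_sq' (l*(1+l)) ((1+2*l)/2) (by linarith) (by nlinarith)
      rw [← hs] at this; linarith
    have hsl : l ≤ s := by
      rw [hs]
      exact Real.le_sqrt' hl' |>.mpr (by nlinarith)
    have hA1 : (1:ℝ) ≤ 1+2*l+2*s := by linarith
    have hB0 : (0:ℝ) ≤ 1+2*l-2*s := by linarith
    have hB1 : 1+2*l-2*s ≤ 1 := by linarith
    have hBpow : (1+2*l-2*s)^((2:ℝ)/3) ≤ 1 := Real.rpow_le_one hB0 hB1 (by norm_num)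
    have hBpow0 : 0 ≤ (1+2*l-2*s)^((2:ℝ)/3) := Real.rpow_nonneg hB0 _
    have hApow0 : 0 ≤ (1+2*l+2*s)^((2:ℝ)/3) := Real.rpow_nonneg (by linarith) _
    set D := (1+2*l+2*s)^((2:ℝ)/3) + (1+2*l-2*s)^((2:ℝ)/3) + 1 with hD
    have hD1 : (1:ℝ) ≤ D := by rw [hD]; linarith
    have hD0 : (0:ℝ) < D := by linarith
    rcases le_total l 1 with hle1 | hge1
    · -- small case : min = l^(1/2)
      have hmin : min (l ^ ((1:ℝ)/2)) (l ^ ((1:ℝ)/3)) = l ^ ((1:ℝ)/2) :=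
        min_eq_left (Real.rpow_le_rpow_of_exponent_ge hl' hle1 (by norm_num))
      rw [hmin]
      have hApow : (1+2*l+2*s)^((2:ℝ)/3) ≤ 1+2*l+2*s := by
        calc (1+2*l+2*s)^((2:ℝ)/3) ≤ (1+2*l+2*s)^((1:ℝ)) :=
              Real.rpow_le_rpow_of_exponent_le hA1 (by norm_num)
        _ = 1+2*l+2*s := Real.rpow_one _
      have hs32 : s ≤ 3/2 := by
        rw [hs]; exact sqrt_le_of_sq' _ _ (by norm_num) (by nlinarith)
      have hDle : D ≤ 8 := by rw [hD]; linarith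
      have hslow : l ^ ((1:ℝ)/2) ≤ s := by
        rw [hs, ← Real.sqrt_eq_rpow]
        exact Real.sqrt_le_sqrt (by nlinarith)
      have hsup : s ≤ 2 * l ^ ((1:ℝ)/2) := by
        rw [hs, ← Real.sqrt_eq_rpow]
        exact sqrt_le_of_sq' _ _ (by positivity) (by
          rw [mul_pow, Real.sq_sqrt hl]; nlinarith)
      constructor
      · have : l ^ ((1:ℝ)/2) / 8 ≤ s / D := div_le_div₀ hs0 hslow hD0 hDle
        linarith [this]
      · calc s / D ≤ s := div_le_self hs0 hD1
        _ ≤ 2 * l ^ ((1:ℝ)/2) := hsup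
    · -- large case : min = l^(1/3)
      have hmin : min (l ^ ((1:ℝ)/2)) (l ^ ((1:ℝ)/3)) = l ^ ((1:ℝ)/3) :=
        min_eq_right (Real.rpow_le_rpow_of_exponent_le hge1 (by norm_num))
      rw [hmin]
      have hl23 : (1:ℝ) ≤ l ^ ((2:ℝ)/3) := Real.one_le_rpow hge1 (by norm_num)
      have hl23pos : (0:ℝ) < l ^ ((2:ℝ)/3) := by positivity
      have hs2l : s ≤ 2*l := by
        rw [hs]; exact sqrt_le_of_sq' _ _ (by linarith) (by nlinarith)
      have key8 : 1+2*l+2*s ≤ 8*l := by linarith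
      have hApowle : (1+2*l+2*s)^((2:ℝ)/3) ≤ 4 * l ^ ((2:ℝ)/3) := by
        calc (1+2*l+2*s)^((2:ℝ)/3) ≤ (8*l)^((2:ℝ)/3) :=
              Real.rpow_le_rpow (by linarith) key8 (by norm_num)
        _ = (8:ℝ)^((2:ℝ)/3) * l ^ ((2:ℝ)/3) := Real.mul_rpow (by norm_num) hl
        _ = 4 * l ^ ((2:ℝ)/3) := by rw [eight_rpow]
      have hDle : D ≤ 6 * l ^ ((2:ℝ)/3) := by rw [hD]; linarith
      have hDge : l ^ ((2:ℝ)/3) ≤ D := by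
        have h1 : l ^ ((2:ℝ)/3) ≤ (1+2*l+2*s)^((2:ℝ)/3) :=
          Real.rpow_le_rpow hl (by linarith) (by norm_num)
        rw [hD]; linarith
      have hsplit : l ^ ((1:ℝ)/3) * l ^ ((2:ℝ)/3) = l := by
        rw [← Real.rpow_add hl']; norm_num
      constructor
      · have h1 : l / (6 * l ^ ((2:ℝ)/3)) ≤ s / D := div_le_div₀ hs0 hsl hD0 hDle
        have h2 : l / (6 * l ^ ((2:ℝ)/3)) = l ^ ((1:ℝ)/3) / 6 := by
          rw [div_eq_div_iff (by positivity) (by norm_num : (6:ℝ) ≠ 0)]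
          linear_combination -6 * hsplit
        have h3 : (0:ℝ) ≤ l ^ ((1:ℝ)/3) := by positivity
        rw [h2] at h1; linarith
      · have h1 : s / D ≤ (2*l) / (l ^ ((2:ℝ)/3)) := by
          have h2l : (0:ℝ) ≤ 2*l := by linarith
          exact div_le_div₀ h2l hs2l hl23pos hDge
        have h2 : (2*l) / (l ^ ((2:ℝ)/3)) = 2 * l ^ ((1:ℝ)/3) := by
          rw [div_eq_iff hl23pos.ne']
          linear_combination -2 * hsplit
        rw [h2] at h1; exact h1
end

section
/- Let Ψ_edge(λ) := √(λ(1+λ)) / ((1+2λ+2√(λ(1+λ)))^{2/3} + (1+2λ−2√(λ(1+λ)))^{2/3} + 1) for λ ≥ 0. Then there exists a constant C > 0 such that for all λ > 0 and all ε ∈ (0,1], |Ψ_edge((1+ε)λ) − Ψ_edge(λ)| ≤ C ε Ψ_edge(λ). -/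
set_option maxHeartbeats 1000000

private lemma aux1 {x : ℝ} (hx : 0 < x) (hx1 : x ≤ 1) : x ≤ x ^ ((2:ℝ)/3) := by
  nth_rewrite 1 [← Real.rpow_one x]
  exact Real.rpow_le_rpow_of_exponent_ge hx hx1 (by norm_num)

private lemma aux2 {x : ℝ} (hx : 1 ≤ x) : x ^ ((2:ℝ)/3) ≤ x := by
  nth_rewrite 2 [← Real.rpow_one x]
  exact Real.rpow_le_rpow_of_exponent_le hx (by norm_num)

private lemma mono_sq {l ε : ℝ} (hl : 0 < l) (hε : 0 < ε) :
    l * (1 + l) ≤ (1 + ε) * l * (1 + (1 + ε) * l) := by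
  nlinarith [mul_pos hε hl, mul_pos (mul_pos hε hl) hl, mul_pos hl hl]

private lemma upper_sq {l ε : ℝ} (hl : 0 < l) (hε : 0 < ε) (hε1 : ε ≤ 1) :
    (1 + ε) * l * (1 + (1 + ε) * l) ≤ (1 + (3/2)*ε)^2 * (l * (1 + l)) := by
  nlinarith [mul_pos hε hl, mul_pos (mul_pos hε hl) hl,
    mul_pos (mul_pos (mul_pos hε hε) hl) hl, mul_pos (mul_pos hε hε) hl]

private lemma sqrt_half {s l : ℝ} (hl : 0 ≤ l) (hs : 0 ≤ s)
    (h2 : s^2 = l * (1 + l)) : s ≤ l + 1/2 := by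
  nlinarith [h2, hs, hl]

private lemma binv_pos {a b : ℝ} (ha : 0 < a) (h : a * b = 1) : 0 < b := by
  nlinarith

private lemma binv_le_one {a b : ℝ} (ha : 1 ≤ a) (hb : 0 < b) (h : a * b = 1) :
    b ≤ 1 := by nlinarith

private lemma a_mono {l ε s s' : ℝ} (hl : 0 < l) (hε : 0 < ε) (hss' : s ≤ s') :
    1 + 2*l + 2*s ≤ 1 + 2*((1+ε)*l) + 2*s' := by
  nlinarith [mul_pos hε hl]

private lemma a_growth {l ε s s' : ℝ} (hl : 0 < l) (hε : 0 < ε) (hs0 : 0 < s)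
    (hs'le : s' ≤ (1 + (3/2)*ε) * s) :
    1 + 2*((1+ε)*l) + 2*s' ≤ (1 + (5/2)*ε) * (1 + 2*l + 2*s) := by
  nlinarith [mul_pos hε hl, mul_pos hε hs0]

theorem stmt_4 : ∃ C : ℝ, 0 < C ∧ ∀ l : ℝ, 0 < l → ∀ ε : ℝ, 0 < ε → ε ≤ 1 →
    |PsiEdge ((1 + ε) * l) - PsiEdge l| ≤ C * ε * PsiEdge l := by
  refine ⟨8, by norm_num, ?_⟩
  intro l hl ε hε hε1
  unfold PsiEdge
  set l' : ℝ := (1 + ε) * l with hl'def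
  have hl' : 0 < l' := by positivity
  set s : ℝ := Real.sqrt (l * (1 + l)) with hsdef
  set s' : ℝ := Real.sqrt (l' * (1 + l')) with hs'def
  have hs0 : 0 < s := Real.sqrt_pos.2 (by positivity)
  have hs'0 : 0 < s' := Real.sqrt_pos.2 (by positivity)
  have hs2 : s ^ 2 = l * (1 + l) := Real.sq_sqrt (by positivity)
  have hs'2 : s' ^ 2 = l' * (1 + l') := Real.sq_sqrt (by positivity)
  have hsle : s ≤ l + 1/2 := sqrt_half hl.le hs0.le hs2
  have hss' : s ≤ s' := Real.sqrt_le_sqrt (by rw [hl'def]; exact mono_sq hl hε)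
  have hs'le : s' ≤ (1 + (3/2)*ε) * s := by
    have h1 : s' ≤ Real.sqrt ((1 + (3/2)*ε)^2 * (l * (1 + l))) := by
      apply Real.sqrt_le_sqrt
      rw [hl'def]
      exact upper_sq hl hε hε1
    rwa [Real.sqrt_mul (by positivity), Real.sqrt_sq (by positivity), ← hsdef] at h1
  set a : ℝ := 1 + 2*l + 2*s with hadef
  set b : ℝ := 1 + 2*l - 2*s with hbdef
  set a' : ℝ := 1 + 2*l' + 2*s' with ha'def
  set b' : ℝ := 1 + 2*l' - 2*s' with hb'def
  have hab : a * b = 1 := by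
    have h : a * b = (1+2*l)^2 - 4*s^2 := by rw [hadef, hbdef]; ring
    rw [h, hs2]; ring
  have ha'b' : a' * b' = 1 := by
    have h : a' * b' = (1+2*l')^2 - 4*s'^2 := by rw [ha'def, hb'def]; ring
    rw [h, hs'2]; ring
  have ha1 : 1 ≤ a := by rw [hadef]; linarith
  have ha'1 : 1 ≤ a' := by rw [ha'def]; linarith
  have ha0 : 0 < a := by linarith
  have ha'0 : 0 < a' := by linarith
  have hb0 : 0 < b := binv_pos ha0 hab
  have hb'0 : 0 < b' := binv_pos ha'0 ha'b'
  have hb1 : b ≤ 1 := binv_le_one ha1 hb0 hab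
  have hb'1 : b' ≤ 1 := binv_le_one ha'1 hb'0 ha'b'
  have haa' : a ≤ a' := by
    rw [hadef, ha'def, hl'def]; exact a_mono hl hε hss'
  have ha'le : a' ≤ (1 + (5/2)*ε) * a := by
    rw [hadef, ha'def, hl'def]; exact a_growth hl hε hs0 hs'le
  have hbdiff : b - b' = b * b' * (a' - a) := by
    linear_combination b' * hab - b * ha'b'
  have hbb' : b' ≤ b := by
    have h := mul_nonneg (mul_pos hb0 hb'0).le (sub_nonneg.2 haa')
    linarith [hbdiff]
  have hbge : b - b' ≤ (5/2)*ε*b := by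
    rw [hbdiff]
    calc b * b' * (a' - a) ≤ b * b' * ((5/2)*ε*a) := by
          apply mul_le_mul_of_nonneg_left (by linarith) (mul_pos hb0 hb'0).le
      _ = (5/2)*ε*b' * (a*b) := by ring
      _ = (5/2)*ε*b' := by rw [hab]; ring
      _ ≤ (5/2)*ε*b := by
          have := mul_le_mul_of_nonneg_left hbb' (by positivity : (0:ℝ) ≤ (5/2)*ε)
          linarith
  -- powers
  have hap : a ^ ((2:ℝ)/3) ≤ a' ^ ((2:ℝ)/3) :=
    Real.rpow_le_rpow ha0.le haa' (by norm_num)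
  have hap0 : 0 < a ^ ((2:ℝ)/3) := Real.rpow_pos_of_pos ha0 _
  have ha'p0 : 0 < a' ^ ((2:ℝ)/3) := Real.rpow_pos_of_pos ha'0 _
  have hbp0 : 0 < b ^ ((2:ℝ)/3) := Real.rpow_pos_of_pos hb0 _
  have hb'p0 : 0 < b' ^ ((2:ℝ)/3) := Real.rpow_pos_of_pos hb'0 _
  have hbp1 : b ^ ((2:ℝ)/3) ≤ 1 := Real.rpow_le_one hb0.le hb1 (by norm_num)
  have hb'p1 : b' ^ ((2:ℝ)/3) ≤ 1 := Real.rpow_le_one hb'0.le hb'1 (by norm_num)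
  have hbp' : b' ^ ((2:ℝ)/3) ≤ b ^ ((2:ℝ)/3) :=
    Real.rpow_le_rpow hb'0.le hbb' (by norm_num)
  have hapow : a' ^ ((2:ℝ)/3) ≤ (1 + (5/2)*ε) * a ^ ((2:ℝ)/3) := by
    calc a' ^ ((2:ℝ)/3) ≤ ((1 + (5/2)*ε) * a) ^ ((2:ℝ)/3) :=
          Real.rpow_le_rpow ha'0.le ha'le (by norm_num)
      _ = (1 + (5/2)*ε) ^ ((2:ℝ)/3) * a ^ ((2:ℝ)/3) :=
          Real.mul_rpow (by positivity) ha0.le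
      _ ≤ (1 + (5/2)*ε) * a ^ ((2:ℝ)/3) :=
          mul_le_mul_of_nonneg_right (aux2 (by linarith)) hap0.le
  have hbpow : b ^ ((2:ℝ)/3) - b' ^ ((2:ℝ)/3) ≤ (5/2)*ε * b ^ ((2:ℝ)/3) := by
    have ht0 : 0 < b'/b := div_pos hb'0 hb0
    have ht1 : b'/b ≤ 1 := (div_le_one hb0).2 hbb'
    have h1 : b ^ ((2:ℝ)/3) * (b'/b) ≤ b ^ ((2:ℝ)/3) * (b'/b) ^ ((2:ℝ)/3) :=
      mul_le_mul_of_nonneg_left (aux1 ht0 ht1) hbp0.le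
    have h2 : b ^ ((2:ℝ)/3) * (b'/b) ^ ((2:ℝ)/3) = b' ^ ((2:ℝ)/3) := by
      rw [← Real.mul_rpow hb0.le ht0.le, mul_div_cancel₀ _ (ne_of_gt hb0)]
    rw [h2] at h1
    have h3 : 1 - b'/b ≤ (5/2)*ε := by
      have h4 : (b - b')/b ≤ (5/2)*ε := (div_le_iff₀ hb0).2 (by linarith)
      have h5 : 1 - b'/b = (b - b')/b := by field_simp
      linarith [h5 ▸ h4]
    calc b ^ ((2:ℝ)/3) - b' ^ ((2:ℝ)/3) ≤ b ^ ((2:ℝ)/3) - b ^ ((2:ℝ)/3) * (b'/b) := by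
          linarith [h1]
      _ = b ^ ((2:ℝ)/3) * (1 - b'/b) := by ring
      _ ≤ b ^ ((2:ℝ)/3) * ((5/2)*ε) := mul_le_mul_of_nonneg_left h3 hbp0.le
      _ = (5/2)*ε * b ^ ((2:ℝ)/3) := by ring
  set D : ℝ := a ^ ((2:ℝ)/3) + b ^ ((2:ℝ)/3) + 1 with hDdef
  set D' : ℝ := a' ^ ((2:ℝ)/3) + b' ^ ((2:ℝ)/3) + 1 with hD'def
  have hD0 : 0 < D := by positivity
  have hD'0 : 0 < D' := by positivity
  have hD'ge : D/2 ≤ D' := by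
    rw [hDdef, hD'def]; linarith [hap, hbp1, hb'p0]
  have hDd : |D' - D| ≤ (5/2)*ε*D := by
    rw [abs_le]
    constructor
    · rw [hDdef, hD'def]
      linarith [hbpow, hap, mul_nonneg hε.le hap0.le, hε.le]
    · rw [hDdef, hD'def]
      linarith [hapow, hbp', mul_nonneg hε.le hbp0.le, hε.le]
  have hnum : |s' * D - s * D'| ≤ 4*ε*(s*D) := by
    have h1 : s' * D - s * D' = (s' - s) * D + s * (D - D') := by ring
    rw [h1]
    calc |(s' - s) * D + s * (D - D')| ≤ |(s' - s) * D| + |s * (D - D')| := abs_add_le _ _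
      _ = (s' - s) * D + s * |D - D'| := by
          rw [abs_mul, abs_mul, abs_of_nonneg (by linarith : (0:ℝ) ≤ s' - s),
            abs_of_pos hD0, abs_of_pos hs0]
      _ ≤ ((3/2)*ε*s) * D + s * ((5/2)*ε*D) := by
          have hd1 : |D - D'| ≤ (5/2)*ε*D := by rw [abs_sub_comm]; exact hDd
          have hs1 : s' - s ≤ (3/2)*ε*s := by linarith [hs'le]
          exact add_le_add (mul_le_mul_of_nonneg_right hs1 hD0.le)
            (mul_le_mul_of_nonneg_left hd1 hs0.le)
      _ = 4*ε*(s*D) := by ring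
  have hsplit : s'/D' - s/D = (s' * D - s * D')/(D' * D) := by
    field_simp
  rw [hsplit, abs_div, abs_of_pos (mul_pos hD'0 hD0)]
  calc |s' * D - s * D'| / (D' * D) ≤ (4*ε*(s*D)) / ((D/2) * D) := by
        apply div_le_div₀ (by positivity) hnum (by positivity)
        exact mul_le_mul_of_nonneg_right hD'ge hD0.le
    _ = 8 * ε * (s / D) := by field_simp; ring
end

section
/- Let I ⊆ ℝ be an interval, C > 0, and let ρ : I → (0,∞) be differentiable with |ρ'(x)| ≤ C/ρ(x)² for all x ∈ I. Then for all x, y ∈ I, |ρ(x) − ρ(y)| ≤ (3C)^{1/3} |x − y|^{1/3}. -/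
theorem stmt_6 (I : Set ℝ) (hI : Convex ℝ I) (C : ℝ) (hC : 0 < C)
    (ρ ρ' : ℝ → ℝ) (hpos : ∀ x ∈ I, 0 < ρ x)
    (hderiv : ∀ x ∈ I, HasDerivWithinAt ρ (ρ' x) I x)
    (hbound : ∀ x ∈ I, |ρ' x| ≤ C / (ρ x) ^ 2) :
    ∀ x ∈ I, ∀ y ∈ I, |ρ x - ρ y| ≤ (3 * C) ^ ((1:ℝ)/3) * |x - y| ^ ((1:ℝ)/3) := by
  intro x hx y hy
  -- derivative of ρ³ is bounded by 3C
  have hcube : ∀ z ∈ I, HasDerivWithinAt (fun t => ρ t ^ 3) (3 * ρ z ^ 2 * ρ' z) I z := by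
    intro z hz
    have := (hderiv z hz).fun_pow 3
    simpa [mul_comm, mul_assoc, mul_left_comm] using this
  have hbd : ∀ z ∈ I, ‖3 * ρ z ^ 2 * ρ' z‖ ≤ 3 * C := by
    intro z hz
    have h1 := hbound z hz
    have h2 := hpos z hz
    have h3 : (0:ℝ) < ρ z ^ 2 := by positivity
    rw [Real.norm_eq_abs, abs_mul, abs_mul]
    have : |ρ' z| * ρ z ^ 2 ≤ C := by
      rw [div_eq_mul_inv] at h1
      calc |ρ' z| * ρ z ^ 2 ≤ C * (ρ z ^ 2)⁻¹ * ρ z ^ 2 := by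
            apply mul_le_mul_of_nonneg_right h1 (le_of_lt h3)
        _ = C := by field_simp
    have habs2 : |ρ z ^ 2| = ρ z ^ 2 := abs_of_pos h3
    rw [habs2]
    calc |(3:ℝ)| * ρ z ^ 2 * |ρ' z| = 3 * (|ρ' z| * ρ z ^ 2) := by
          rw [abs_of_pos (by norm_num : (0:ℝ) < 3)]; ring
      _ ≤ 3 * C := by linarith
  have hlip : ‖ρ x ^ 3 - ρ y ^ 3‖ ≤ 3 * C * ‖x - y‖ :=
    Convex.norm_image_sub_le_of_norm_hasDerivWithin_le hcube hbd hI hy hx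
  rw [Real.norm_eq_abs, Real.norm_eq_abs] at hlip
  -- |a - b| ^ 3 ≤ |a³ - b³|
  have key : |ρ x - ρ y| ^ 3 ≤ |ρ x ^ 3 - ρ y ^ 3| := by
    have ha := (hpos x hx).le
    have hb := (hpos y hy).le
    rcases le_total (ρ y) (ρ x) with h | h
    · rw [abs_of_nonneg (by linarith), abs_of_nonneg (by nlinarith [pow_le_pow_left₀ hb h 3])]
      nlinarith [mul_nonneg ha hb, sq_nonneg (ρ x - ρ y)]
    · rw [abs_of_nonpos (by linarith), abs_of_nonpos (by nlinarith [pow_le_pow_left₀ ha h 3])]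
      nlinarith [mul_nonneg ha hb, sq_nonneg (ρ x - ρ y)]
  -- combine: |ρx - ρy|³ ≤ 3C|x-y|, take cube roots
  have h3 : |ρ x - ρ y| ^ 3 ≤ 3 * C * |x - y| := le_trans key hlip
  have habs : (0:ℝ) ≤ |ρ x - ρ y| := abs_nonneg _
  have hrhs : (0:ℝ) ≤ 3 * C * |x - y| := by positivity
  have := Real.rpow_le_rpow (by positivity) h3 (by norm_num : (0:ℝ) ≤ 1/3)
  rw [Real.mul_rpow (by positivity) (abs_nonneg _)] at this
  calc |ρ x - ρ y| = (|ρ x - ρ y| ^ 3) ^ ((1:ℝ)/3) := by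
        rw [← Real.rpow_natCast _ 3, ← Real.rpow_mul habs]
        norm_num
    _ ≤ (3 * C) ^ ((1:ℝ)/3) * |x - y| ^ ((1:ℝ)/3) := this
end

section
/- Let I ⊆ ℝ be an interval, C > 0, Δ > 0, and let ρ : I → (0,∞) be differentiable with |ρ'(x)| ≤ C/(ρ(x)(ρ(x) + Δ^{1/3})) for all x ∈ I. Then for all x, y ∈ I, |ρ(x) − ρ(y)| ≤ min{ (3C|x−y|)^{1/3}, (2C|x−y|)^{1/2} Δ^{−1/6} }. -/
theorem stmt_7 (I : Set ℝ) (hI : Convex ℝ I) (C Δ : ℝ) (hC : 0 < C) (hΔ : 0 < Δ)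
    (ρ ρ' : ℝ → ℝ) (hpos : ∀ x ∈ I, 0 < ρ x)
    (hderiv : ∀ x ∈ I, HasDerivWithinAt ρ (ρ' x) I x)
    (hbound : ∀ x ∈ I, |ρ' x| ≤ C / (ρ x * (ρ x + Δ ^ ((1:ℝ)/3)))) :
    ∀ x ∈ I, ∀ y ∈ I, |ρ x - ρ y| ≤
      min ((3 * C * |x - y|) ^ ((1:ℝ)/3))
        ((2 * C * |x - y|) ^ ((1:ℝ)/2) * Δ ^ (-(1:ℝ)/6)) := by
  intro x hx y hy
  set t : ℝ := Δ ^ ((1:ℝ)/3) with ht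
  have htpos : 0 < t := Real.rpow_pos_of_pos hΔ _
  -- cube bound
  have hcube : ∀ z ∈ I, HasDerivWithinAt (fun w => ρ w ^ 3)
      ((3:ℕ) * ρ z ^ 2 * ρ' z) I z := by
    intro z hz
    simpa using (hderiv z hz).fun_pow 3
  have hcubeb : ∀ z ∈ I, ‖(3:ℕ) * ρ z ^ 2 * ρ' z‖ ≤ 3 * C := by
    intro z hz
    have hpz := hpos z hz
    have hb := hbound z hz
    have h1 : ‖(3:ℕ) * ρ z ^ 2 * ρ' z‖ = 3 * ρ z ^ 2 * |ρ' z| := by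
      rw [Real.norm_eq_abs, abs_mul]
      have : |(3:ℕ) * ρ z ^ 2| = 3 * ρ z ^ 2 := by
        rw [abs_of_nonneg (by positivity)]; norm_num
      rw [this]
    rw [h1]
    calc 3 * ρ z ^ 2 * |ρ' z| ≤ 3 * ρ z ^ 2 * (C / (ρ z * (ρ z + t))) := by
          apply mul_le_mul_of_nonneg_left hb (by positivity)
      _ ≤ 3 * C := by
          rw [← mul_div_assoc, div_le_iff₀ (by positivity)]
          nlinarith [mul_nonneg (mul_nonneg hC.le hpz.le) htpos.le]
  have hmvt1 : |ρ x ^ 3 - ρ y ^ 3| ≤ 3 * C * |x - y| := by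
    have := hI.norm_image_sub_le_of_norm_hasDerivWithin_le hcube hcubeb hy hx
    simpa [Real.norm_eq_abs, abs_sub_comm] using this
  -- square bound
  have hsq : ∀ z ∈ I, HasDerivWithinAt (fun w => ρ w ^ 2)
      ((2:ℕ) * ρ z ^ 1 * ρ' z) I z := by
    intro z hz
    simpa using (hderiv z hz).fun_pow 2
  have hsqb : ∀ z ∈ I, ‖(2:ℕ) * ρ z ^ 1 * ρ' z‖ ≤ 2 * C / t := by
    intro z hz
    have hpz := hpos z hz
    have hb := hbound z hz
    have h1 : ‖(2:ℕ) * ρ z ^ 1 * ρ' z‖ = 2 * ρ z * |ρ' z| := by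
      rw [Real.norm_eq_abs, abs_mul]
      have : |(2:ℕ) * ρ z ^ 1| = 2 * ρ z := by
        rw [abs_of_nonneg (by positivity)]; norm_num
      rw [this]
    rw [h1]
    calc 2 * ρ z * |ρ' z| ≤ 2 * ρ z * (C / (ρ z * (ρ z + t))) := by
          apply mul_le_mul_of_nonneg_left hb (by positivity)
      _ ≤ 2 * C / t := by
          rw [← mul_div_assoc, div_le_div_iff₀ (by positivity) htpos]
          nlinarith [mul_nonneg hC.le (mul_nonneg hpz.le hpz.le)]
  have hmvt2 : |ρ x ^ 2 - ρ y ^ 2| ≤ 2 * C / t * |x - y| := by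
    have := hI.norm_image_sub_le_of_norm_hasDerivWithin_le hsq hsqb hy hx
    simpa [Real.norm_eq_abs, abs_sub_comm] using this
  have hpx := hpos x hx
  have hpy := hpos y hy
  set d : ℝ := |ρ x - ρ y| with hd
  have hdnn : 0 ≤ d := abs_nonneg _
  -- d^3 ≤ |ρx³-ρy³|, d^2 ≤ |ρx²-ρy²|
  have hd3 : d ^ 3 ≤ |ρ x ^ 3 - ρ y ^ 3| := by
    rcases le_total (ρ x) (ρ y) with h | h
    · rw [hd, abs_of_nonpos (by linarith),
        abs_of_nonpos (sub_nonpos.2 (pow_le_pow_left₀ hpx.le h 3))]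
      nlinarith [mul_nonneg (mul_nonneg hpx.le hpy.le) (sub_nonneg.2 h)]
    · rw [hd, abs_of_nonneg (by linarith),
        abs_of_nonneg (sub_nonneg.2 (pow_le_pow_left₀ hpy.le h 3))]
      nlinarith [mul_nonneg (mul_nonneg hpx.le hpy.le) (sub_nonneg.2 h)]
  have hd2 : d ^ 2 ≤ |ρ x ^ 2 - ρ y ^ 2| := by
    rcases le_total (ρ x) (ρ y) with h | h
    · rw [hd, abs_of_nonpos (by linarith),
        abs_of_nonpos (sub_nonpos.2 (pow_le_pow_left₀ hpx.le h 2))]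
      nlinarith [mul_nonneg hpx.le (sub_nonneg.2 h)]
    · rw [hd, abs_of_nonneg (by linarith),
        abs_of_nonneg (sub_nonneg.2 (pow_le_pow_left₀ hpy.le h 2))]
      nlinarith [mul_nonneg hpy.le (sub_nonneg.2 h)]
  refine le_min ?_ ?_
  · -- 1/3 bound
    have h1 : d ^ 3 ≤ 3 * C * |x - y| := hd3.trans hmvt1
    calc d = (d ^ (3:ℕ)) ^ ((1:ℝ)/3) := by
            rw [← Real.rpow_natCast d 3, ← Real.rpow_mul hdnn]
            norm_num
      _ ≤ (3 * C * |x - y|) ^ ((1:ℝ)/3) :=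
            Real.rpow_le_rpow (by positivity) h1 (by norm_num)
  · -- 1/2 bound
    have h1 : d ^ 2 ≤ 2 * C * |x - y| * t⁻¹ := by
      calc d ^ 2 ≤ 2 * C / t * |x - y| := hd2.trans hmvt2
        _ = 2 * C * |x - y| * t⁻¹ := by ring
    have htinv : t⁻¹ = Δ ^ (-(1:ℝ)/3) := by
      rw [ht, ← Real.rpow_neg hΔ.le]
      norm_num
    calc d = (d ^ (2:ℕ)) ^ ((1:ℝ)/2) := by
            rw [← Real.rpow_natCast d 2, ← Real.rpow_mul hdnn]
            norm_num
      _ ≤ (2 * C * |x - y| * t⁻¹) ^ ((1:ℝ)/2) :=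
            Real.rpow_le_rpow (by positivity) h1 (by norm_num)
      _ = (2 * C * |x - y|) ^ ((1:ℝ)/2) * Δ ^ (-(1:ℝ)/6) := by
            rw [htinv, Real.mul_rpow (by positivity) (by positivity),
              ← Real.rpow_mul hΔ.le]
            norm_num
end

section
/- Let T > 0 and let A : [0,T] → Matrix(N×N,ℝ) be continuous with nonnegative off-diagonal entries and nonpositive row sums for every t. Let F : [0,T] → ℝ^N be continuous and let u : [0,T] → ℝ^N be differentiable with u'(t) = A(t)u(t) + F(t). Then for all t ∈ [0,T], ‖u(t)‖_∞ ≤ ‖u(0)‖_∞ + ∫₀^t ‖F(s)‖_∞ ds. -/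
open Set Finset Filter MeasureTheory intervalIntegral Topology

lemma key_est {N : ℕ} (A : Matrix (Fin N) (Fin N) ℝ) (v w : Fin N → ℝ) (h : ℝ)
    (hh : 0 ≤ h) (hM : ∀ i j, i ≠ j → 0 ≤ A i j) (hr : ∀ i, ∑ j, A i j ≤ 0)
    (hd : ∀ i, 0 ≤ 1 + h * A i i) :
    ‖v + h • (A.mulVec v + w)‖ ≤ ‖v‖ + h * ‖w‖ := by
  rw [pi_norm_le_iff_of_nonneg (by positivity)]
  intro i
  have hvj : ∀ j, |v j| ≤ ‖v‖ := fun j => (Real.norm_eq_abs (v j)) ▸ norm_le_pi_norm v j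
  have hwi : |w i| ≤ ‖w‖ := (Real.norm_eq_abs (w i)) ▸ norm_le_pi_norm w i
  simp only [Pi.add_apply, Pi.smul_apply, smul_eq_mul, Real.norm_eq_abs]
  have hmv : A.mulVec v i = ∑ j, A i j * v j := rfl
  rw [hmv]
  have hsplit : v i + h * (∑ j, A i j * v j + w i)
      = ((1 + h * A i i) * v i + ∑ j ∈ univ.erase i, (h * A i j) * v j) + h * w i := by
    rw [← Finset.sum_erase_add _ _ (Finset.mem_univ i)]
    simp only [mul_add, Finset.mul_sum, ← mul_assoc]
    ring
  rw [hsplit]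
  have h1 : |(1 + h * A i i) * v i + ∑ j ∈ univ.erase i, (h * A i j) * v j|
      ≤ (1 + h * A i i) * ‖v‖ + ∑ j ∈ univ.erase i, (h * A i j) * ‖v‖ := by
    refine (abs_add_le _ _).trans (add_le_add ?_ ?_)
    · rw [abs_mul, abs_of_nonneg (hd i)]
      exact mul_le_mul_of_nonneg_left (hvj i) (hd i)
    · refine (Finset.abs_sum_le_sum_abs _ _).trans (Finset.sum_le_sum fun j hj => ?_)
      have hA : 0 ≤ h * A i j := mul_nonneg hh (hM i j (Finset.ne_of_mem_erase hj).symm)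
      rw [abs_mul, abs_of_nonneg hA]
      exact mul_le_mul_of_nonneg_left (hvj j) hA
  have h2 : (1 + h * A i i) * ‖v‖ + ∑ j ∈ univ.erase i, (h * A i j) * ‖v‖ ≤ ‖v‖ := by
    have : (1 + h * A i i) * ‖v‖ + ∑ j ∈ univ.erase i, (h * A i j) * ‖v‖
        = (1 + h * ∑ j, A i j) * ‖v‖ := by
      rw [← Finset.sum_erase_add _ _ (Finset.mem_univ i)]
      simp only [add_mul, one_mul, Finset.sum_mul, Finset.mul_sum, mul_assoc]
      ring_nf
      rw [Finset.mul_sum]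
      congr 1
      exact Finset.sum_congr rfl fun j _ => by ring
    rw [this]
    nlinarith [norm_nonneg v, mul_nonpos_of_nonneg_of_nonpos hh (hr i)]
  calc |(1 + h * A i i) * v i + ∑ j ∈ univ.erase i, (h * A i j) * v j + h * w i|
      ≤ |(1 + h * A i i) * v i + ∑ j ∈ univ.erase i, (h * A i j) * v j| + |h * w i| := abs_add_le _ _
    _ ≤ ‖v‖ + h * ‖w‖ := by
        refine add_le_add (h1.trans h2) ?_
        rw [abs_mul, abs_of_nonneg hh]
        exact mul_le_mul_of_nonneg_left hwi hh

theorem stmt_15 (N : ℕ) (T : ℝ) (hT : 0 < T)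
    (A : ℝ → Matrix (Fin N) (Fin N) ℝ) (F : ℝ → Fin N → ℝ)
    (hAcont : ContinuousOn A (Set.Icc 0 T))
    (hMetzler : ∀ t ∈ Set.Icc (0:ℝ) T, ∀ i j, i ≠ j → 0 ≤ A t i j)
    (hrow : ∀ t ∈ Set.Icc (0:ℝ) T, ∀ i, ∑ j, A t i j ≤ 0)
    (hFcont : ContinuousOn F (Set.Icc 0 T))
    (u : ℝ → Fin N → ℝ)
    (hu : ∀ t ∈ Set.Icc (0:ℝ) T,
      HasDerivWithinAt u ((A t).mulVec (u t) + F t) (Set.Icc 0 T) t) :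
    ∀ t ∈ Set.Icc (0:ℝ) T, ‖u t‖ ≤ ‖u 0‖ + ∫ s in (0:ℝ)..t, ‖F s‖ := by
  set g : ℝ → ℝ := fun s => ‖F s‖ with hgdef
  have hgcont : ContinuousOn g (Set.Icc 0 T) := hFcont.norm
  set B : ℝ → ℝ := fun x => ‖u 0‖ + ∫ s in (0:ℝ)..x, g s with hBdef
  have hf : ContinuousOn (fun t => ‖u t‖) (Set.Icc 0 T) :=
    fun t ht => ((hu t ht).continuousWithinAt).norm
  have ha : ‖u 0‖ ≤ B 0 := by simp [hBdef]
  have hB : ContinuousOn B (Set.Icc 0 T) := by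
    refine continuousOn_const.add ?_
    have := intervalIntegral.continuousOn_primitive_interval
      (f := g) (a := (0:ℝ)) (b := T) (μ := volume) ?_
    · rwa [Set.uIcc_of_le hT.le] at this
    · rw [Set.uIcc_of_le hT.le]
      exact hgcont.integrableOn_Icc
  have hB' : ∀ x ∈ Set.Ico (0:ℝ) T, HasDerivWithinAt B (g x) (Set.Ici x) x := by
    intro x hx
    have hmem : Set.Icc (0:ℝ) T ∈ 𝓝[>] x := Icc_mem_nhdsGT_of_mem hx
    have hint : IntervalIntegrable g volume 0 x := by
      apply ContinuousOn.intervalIntegrable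
      rw [Set.uIcc_of_le hx.1]
      exact hgcont.mono (Set.Icc_subset_Icc le_rfl hx.2.le)
    have hmeas : StronglyMeasurableAtFilter g (𝓝[>] x) volume :=
      ⟨Set.Icc 0 T, hmem, hgcont.aestronglyMeasurable measurableSet_Icc⟩
    have hcw : ContinuousWithinAt g (Set.Ioi x) x :=
      (hgcont x ⟨hx.1, hx.2.le⟩).mono_of_mem_nhdsWithin hmem
    exact (intervalIntegral.integral_hasDerivWithinAt_right hint hmeas hcw).const_add _
  have bound : ∀ x ∈ Set.Ico (0:ℝ) T, ∀ r, g x < r →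
      ∃ᶠ z in 𝓝[>] x, slope (fun t => ‖u t‖) x z < r := by
    intro x hx r hr
    have hxI : x ∈ Set.Icc (0:ℝ) T := ⟨hx.1, hx.2.le⟩
    set u' : Fin N → ℝ := (A x).mulVec (u x) + F x with hu'def
    have hlo := hasDerivWithinAt_iff_isLittleO.1 (hu x hxI)
    set c : ℝ := (r - g x) / 2 with hcdef
    have hc : 0 < c := half_pos (sub_pos.2 hr)
    have h1 : ∀ᶠ z in 𝓝[Set.Icc 0 T] x, ‖u z - u x - (z - x) • u'‖ ≤ c * ‖z - x‖ :=
      hlo.def hc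
    have h2 : ∀ᶠ z in 𝓝 x, ∀ i, 0 ≤ 1 + (z - x) * A x i i := by
      refine Filter.eventually_all.2 fun i => ?_
      have hco : ContinuousAt (fun z : ℝ => 1 + (z - x) * A x i i) x := by fun_prop
      have h0 : (0:ℝ) < 1 + (x - x) * A x i i := by simp
      exact (hco.eventually (eventually_gt_nhds h0)).mono fun z hz => hz.le
    have hle1 : 𝓝[Set.Ioc x T] x ≤ 𝓝[Set.Icc 0 T] x :=
      nhdsWithin_mono x (fun z hz => ⟨hx.1.trans hz.1.le, hz.2⟩)
    have hle2 : 𝓝[Set.Ioc x T] x ≤ 𝓝[>] x :=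
      nhdsWithin_mono x Set.Ioc_subset_Ioi_self
    have hne : (𝓝[Set.Ioc x T] x).NeBot := left_nhdsWithin_Ioc_neBot hx.2
    have hev : ∀ᶠ z in 𝓝[Set.Ioc x T] x, slope (fun t => ‖u t‖) x z < r := by
      filter_upwards [hle1 h1, hle1 (nhdsWithin_le_nhds h2), self_mem_nhdsWithin]
        with z hz1 hz2 hzmem
      have hzx : 0 < z - x := sub_pos.2 hzmem.1
      have hkey := key_est (A x) (u x) (F x) (z - x) hzx.le (hMetzler x hxI) (hrow x hxI) hz2
      have hnorm : ‖u z‖ ≤ ‖u x‖ + (z - x) * ‖F x‖ + c * (z - x) := by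
        calc ‖u z‖ = ‖(u x + (z - x) • u') + (u z - u x - (z - x) • u')‖ := by
              congr 1; abel
          _ ≤ ‖u x + (z - x) • u'‖ + ‖u z - u x - (z - x) • u'‖ := norm_add_le _ _
          _ ≤ (‖u x‖ + (z - x) * ‖F x‖) + c * ‖z - x‖ := add_le_add hkey hz1
          _ = ‖u x‖ + (z - x) * ‖F x‖ + c * (z - x) := by
              rw [Real.norm_eq_abs, abs_of_pos hzx]
      rw [slope_def_field, div_lt_iff₀ hzx]
      have hgx : g x = ‖F x‖ := rfl
      have hcr : ‖F x‖ + c < r := by rw [← hgx] at *; rw [hcdef]; linarith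
      nlinarith
    exact (hev.frequently).filter_mono hle2
  exact fun t ht =>
    image_le_of_liminf_slope_right_le_deriv_boundary hf ha hB hB' bound ht
end

section
/- Let Ω ⊆ ℂ be open, F : Ω → ℂ holomorphic, U ⊆ ℂ open, and let m : (a,b) × U → ℂ be continuously differentiable (in both variables) such that for all (t,ζ), ζ + t·m(t,ζ) ∈ Ω, m(t,ζ) = F(ζ + t·m(t,ζ)), and 1 − t·F'(ζ + t·m(t,ζ)) ≠ 0. Then m satisfies the complex Burgers equation ∂_t m(t,ζ) = m(t,ζ) · ∂_ζ m(t,ζ) on (a,b) × U. -/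
theorem stmt_16 (Ω U : Set ℂ) (hΩ : IsOpen Ω) (hU : IsOpen U)
    (F : ℂ → ℂ) (hF : DifferentiableOn ℂ F Ω)
    (a b : ℝ) (m mt mz : ℝ → ℂ → ℂ)
    (hmem : ∀ t ∈ Set.Ioo a b, ∀ ζ ∈ U, ζ + (t : ℂ) * m t ζ ∈ Ω)
    (hcont_t : ContinuousOn (fun p : ℝ × ℂ => mt p.1 p.2) (Set.Ioo a b ×ˢ U))
    (hcont_z : ContinuousOn (fun p : ℝ × ℂ => mz p.1 p.2) (Set.Ioo a b ×ˢ U))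
    (hmt : ∀ t ∈ Set.Ioo a b, ∀ ζ ∈ U, HasDerivAt (fun s : ℝ => m s ζ) (mt t ζ) t)
    (hmz : ∀ t ∈ Set.Ioo a b, ∀ ζ ∈ U, HasDerivAt (fun z : ℂ => m t z) (mz t ζ) ζ)
    (heq : ∀ t ∈ Set.Ioo a b, ∀ ζ ∈ U, m t ζ = F (ζ + (t : ℂ) * m t ζ))
    (hnd : ∀ t ∈ Set.Ioo a b, ∀ ζ ∈ U, 1 - (t : ℂ) * deriv F (ζ + (t : ℂ) * m t ζ) ≠ 0) :
    ∀ t ∈ Set.Ioo a b, ∀ ζ ∈ U, mt t ζ = m t ζ * mz t ζ := by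
  intro t ht ζ hζ
  set w : ℂ := ζ + (t : ℂ) * m t ζ with hw
  have hFd : HasDerivAt F (deriv F w) w :=
    ((hF.differentiableAt (hΩ.mem_nhds (hmem t ht ζ hζ))).hasDerivAt)
  set f' := deriv F w
  -- derivative in t of the composition
  have hg : HasDerivAt (fun s : ℝ => ζ + (s : ℂ) * m s ζ)
      (m t ζ + (t : ℂ) * mt t ζ) t := by
    have h1 : HasDerivAt (fun s : ℝ => (s : ℂ)) 1 t := by
      exact Complex.ofRealCLM.hasDerivAt (x := t)
    have h2 := h1.mul (hmt t ht ζ hζ)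
    simpa [one_mul] using (h2.const_add ζ)
  have hcompT : HasDerivAt (fun s : ℝ => F (ζ + (s : ℂ) * m s ζ))
      (f' * (m t ζ + (t : ℂ) * mt t ζ)) t := by
    have := HasDerivAt.scomp (x := t) (g₁ := F) (h := fun s : ℝ => ζ + (s : ℂ) * m s ζ)
      hFd hg
    simpa [Function.comp_def, smul_eq_mul, mul_comm] using this
  have heqT : (fun s : ℝ => F (ζ + (s : ℂ) * m s ζ)) =ᶠ[nhds t] fun s : ℝ => m s ζ := by
    filter_upwards [isOpen_Ioo.mem_nhds ht] with s hs
    exact (heq s hs ζ hζ).symm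
  have hT : mt t ζ = f' * (m t ζ + (t : ℂ) * mt t ζ) :=
    (hmt t ht ζ hζ).unique (hcompT.congr_of_eventuallyEq heqT.symm)
  -- derivative in ζ of the composition
  have hgz : HasDerivAt (fun z : ℂ => z + (t : ℂ) * m t z) (1 + (t : ℂ) * mz t ζ) ζ :=
    (hasDerivAt_id ζ).add ((hmz t ht ζ hζ).const_mul _)
  have hcompZ : HasDerivAt (fun z : ℂ => F (z + (t : ℂ) * m t z))
      (f' * (1 + (t : ℂ) * mz t ζ)) ζ := by
    have := HasDerivAt.comp (x := ζ) (h₂ := F) (h := fun z : ℂ => z + (t : ℂ) * m t z)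
      hFd hgz
    simpa [Function.comp_def] using this
  have heqZ : (fun z : ℂ => F (z + (t : ℂ) * m t z)) =ᶠ[nhds ζ] fun z : ℂ => m t z := by
    filter_upwards [hU.mem_nhds hζ] with z hz
    exact (heq t ht z hz).symm
  have hZ : mz t ζ = f' * (1 + (t : ℂ) * mz t ζ) :=
    (hmz t ht ζ hζ).unique (hcompZ.congr_of_eventuallyEq heqZ.symm)
  have hnd' : 1 - (t : ℂ) * f' ≠ 0 := hnd t ht ζ hζ
  have e1 : mt t ζ * (1 - (t : ℂ) * f') = f' * m t ζ := by ring_nf; linear_combination hT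
  have e2 : mz t ζ * (1 - (t : ℂ) * f') = f' := by ring_nf; linear_combination hZ
  have : mt t ζ * (1 - (t : ℂ) * f') = m t ζ * mz t ζ * (1 - (t : ℂ) * f') := by
    rw [e1, mul_assoc, e2]; ring
  exact mul_right_cancel₀ hnd' this
end
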